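/- With m_h(ξ) = sqrt(tanh(h ξ)/ξ) for ξ ≠ 0 and m_h(0) = sqrt(h) (the Whitham symbol with depth h > 0), setting c_h = sqrt(tanh h), the coefficient θ_b := -m_h'(1) - (1/2) m_h''(1) equals [ (h(1 - c_h⁴) - c_h²)² + 4h² c_h⁴ (1 - c_h⁴) ] / (8 c_h³), and in particular θ_b > 0 for every h > 0 with h(1-c_h⁴) ≠ c_h² or c_h⁴ < 1. -/

import Mathlib

open Real

private lemma hasDerivAt_tanh' (x : ℝ) : HasDerivAt Real.tanh (1 - Real.tanh x ^ 2) x := by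
  have hd : HasDerivAt (fun y => Real.sinh y / Real.cosh y)
      ((Real.cosh x * Real.cosh x - Real.sinh x * Real.sinh x) / Real.cosh x ^ 2) x :=
    (Real.hasDerivAt_sinh x).div (Real.hasDerivAt_cosh x) (Real.cosh_pos x).ne'
  have he : (fun y => Real.sinh y / Real.cosh y) = Real.tanh := by
    funext y; rw [Real.tanh_eq_sinh_div_cosh]
  rw [he] at hd
  convert hd using 1
  have h1 := Real.cosh_sq_sub_sinh_sq x
  have h2 := (Real.cosh_pos x).ne'
  rw [Real.tanh_eq_sinh_div_cosh]
  field_simp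

private lemma tanh_pos' {x : ℝ} (hx : 0 < x) : 0 < Real.tanh x := by
  rw [Real.tanh_eq_sinh_div_cosh]
  exact div_pos (by rwa [Real.sinh_pos_iff]) (Real.cosh_pos x)

private lemma tanh_lt_one' (x : ℝ) : Real.tanh x < 1 := by
  rw [Real.tanh_eq_sinh_div_cosh]
  exact (div_lt_one (Real.cosh_pos x)).2 (Real.sinh_lt_cosh x)

private lemma hasDerivAt_mulArg (h : ℝ) (ξ : ℝ) :
    HasDerivAt (fun x : ℝ => Real.tanh (h * x)) (h * (1 - Real.tanh (h * ξ) ^ 2)) ξ := by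
  have h1 : HasDerivAt (fun x : ℝ => h * x) h ξ := by
    simpa using (hasDerivAt_id ξ).const_mul h
  have := (hasDerivAt_tanh' (h * ξ)).comp ξ h1
  simpa [mul_comm, Function.comp_def] using this

private lemma hasDerivAt_g (h : ℝ) (hh : 0 < h) (ξ : ℝ) (hξ : 0 < ξ) :
    HasDerivAt (fun x : ℝ => Real.sqrt (Real.tanh (h * x) / x))
      ((h * (1 - Real.tanh (h * ξ) ^ 2) * ξ - Real.tanh (h * ξ)) / ξ ^ 2 /
        (2 * Real.sqrt (Real.tanh (h * ξ) / ξ))) ξ := by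
  have hfpos : 0 < Real.tanh (h * ξ) / ξ := div_pos (tanh_pos' (mul_pos hh hξ)) hξ
  have hf : HasDerivAt (fun x : ℝ => Real.tanh (h * x) / x)
      ((h * (1 - Real.tanh (h * ξ) ^ 2) * ξ - Real.tanh (h * ξ) * 1) / ξ ^ 2) ξ :=
    (hasDerivAt_mulArg h ξ).div (hasDerivAt_id ξ) hξ.ne'
  have := hf.sqrt hfpos.ne'
  simpa using this

theorem stmt_10 (h : ℝ) (hh : 0 < h) :
    let m : ℝ → ℝ := fun ξ => if ξ = 0 then Real.sqrt h else Real.sqrt (Real.tanh (h * ξ) / ξ)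
    let c : ℝ := Real.sqrt (Real.tanh h)
    let θb : ℝ := -deriv m 1 - (1 / 2) * deriv (deriv m) 1
    θb = ((h * (1 - c ^ 4) - c ^ 2) ^ 2 + 4 * h ^ 2 * c ^ 4 * (1 - c ^ 4)) / (8 * c ^ 3) ∧
    ((h * (1 - c ^ 4) ≠ c ^ 2 ∨ c ^ 4 < 1) → 0 < θb) := by
  intro m c θb
  set G : ℝ → ℝ := fun ξ =>
    (h * (1 - Real.tanh (h * ξ) ^ 2) * ξ - Real.tanh (h * ξ)) / ξ ^ 2 /
      (2 * Real.sqrt (Real.tanh (h * ξ) / ξ)) with hGdef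
  have hm : ∀ ξ : ℝ, 0 < ξ → HasDerivAt m (G ξ) ξ := by
    intro ξ hξ
    refine (hasDerivAt_g h hh ξ hξ).congr_of_eventuallyEq ?_
    filter_upwards [compl_singleton_mem_nhds hξ.ne'] with x hx
    simp only [m, if_neg (by simpa using hx)]
  have hd1 : deriv m 1 = G 1 := (hm 1 one_pos).deriv
  have hd2 : deriv (deriv m) 1 = deriv G 1 := by
    apply Filter.EventuallyEq.deriv_eq
    filter_upwards [Ioi_mem_nhds (show (0:ℝ) < 1 by norm_num)] with x hx
    exact (hm x hx).deriv
  -- second derivative: build HasDerivAt for G at 1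
  have hT := hasDerivAt_mulArg h 1
  have hT2 : HasDerivAt (fun x : ℝ => Real.tanh (h * x) ^ 2)
      (2 * Real.tanh (h * 1) * (h * (1 - Real.tanh (h * 1) ^ 2))) 1 := by
    simpa [mul_assoc, mul_comm, mul_left_comm] using hT.fun_pow 2
  have hA : HasDerivAt (fun x : ℝ => h * (1 - Real.tanh (h * x) ^ 2))
      (h * -(2 * Real.tanh (h * 1) * (h * (1 - Real.tanh (h * 1) ^ 2)))) 1 :=
    (hT2.const_sub 1).const_mul h
  have hB := hA.mul (hasDerivAt_id 1)
  have hN1 := hB.sub hT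
  have hpow : HasDerivAt (fun x : ℝ => x ^ 2) ((2:ℕ) * (1:ℝ) ^ (2 - 1)) 1 := hasDerivAt_pow 2 1
  have hN := hN1.div hpow (by norm_num)
  have hg1 := hasDerivAt_g h hh 1 one_pos
  have hD := hg1.const_mul 2
  have hDne : 2 * Real.sqrt (Real.tanh (h * 1) / 1) ≠ 0 := by
    have : 0 < Real.sqrt (Real.tanh (h * 1) / 1) :=
      Real.sqrt_pos.2 (by simpa using (tanh_pos' (by simpa using hh)))
    positivity
  have hG1 := hN.div hD hDne
  have hd2' : deriv G 1 = _ := hG1.deriv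
  -- now algebra
  have hcpos : 0 < c := Real.sqrt_pos.2 (tanh_pos' hh)
  have hc2 : c ^ 2 = Real.tanh h := Real.sq_sqrt (tanh_pos' hh).le
  have hc4 : c ^ 4 < 1 := by
    have h1 : Real.tanh h < 1 := tanh_lt_one' h
    nlinarith [tanh_pos' hh]
  have hsq : Real.sqrt (Real.tanh (h * 1) / 1) = c := by norm_num [c]
  have key : θb = ((h * (1 - c ^ 4) - c ^ 2) ^ 2 + 4 * h ^ 2 * c ^ 4 * (1 - c ^ 4)) / (8 * c ^ 3) := by
    show -deriv m 1 - (1 / 2) * deriv (deriv m) 1 = _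
    rw [hd1, hd2, hd2', hGdef]
    have hsq' : Real.sqrt (Real.tanh h) = c := rfl
    simp only [hsq, hsq', mul_one, div_one, id_eq, Pi.mul_apply, Pi.sub_apply, Pi.div_apply]
    rw [show Real.tanh h = c ^ 2 from hc2.symm]
    have hcne : c ≠ 0 := hcpos.ne'
    field_simp
    ring
  refine ⟨key, fun _ => ?_⟩
  rw [key]
  apply div_pos
  · have : 0 < 4 * h ^ 2 * c ^ 4 * (1 - c ^ 4) :=
      mul_pos (by positivity) (by linarith)
    nlinarith [sq_nonneg (h * (1 - c ^ 4) - c ^ 2)]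
  · positivity
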